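/- The converse of the previous fails: the left-shift function F on ℝ[[X]] sending ∑_{k≥0} a_k X^k to ∑_{k≥0} a_{k+1} X^k is continuous everywhere in the order topology (given ε > 0 one may take η = ε·X), but F is not NS*-continuous. -/

import Mathlib

open PowerSeries

attribute [local instance] Classical.propDecidable

/-- `z` is positive for the lexicographic order on `ℝ[[X]]`. -/
def IsPos (z : PowerSeries ℝ) : Prop :=
  ∃ p : ℕ, (∀ k < p, coeff k z = 0) ∧ 0 < coeff p z

/-- The lexicographic order on `ℝ[[X]]`. -/
def lexLe (x y : PowerSeries ℝ) : Prop := x = y ∨ IsPos (y - x)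

/-- Strict lexicographic order. -/
def lexLt (x y : PowerSeries ℝ) : Prop := IsPos (y - x)

/-- Absolute value for the lexicographic order. -/
noncomputable def pabs (x : PowerSeries ℝ) : PowerSeries ℝ :=
  if lexLe 0 x then x else -x

/-- `a ≪ b` : `k·|a| < |b|` for all naturals `k`. -/
def muchLt (a b : PowerSeries ℝ) : Prop :=
  ∀ k : ℕ, lexLt ((k : PowerSeries ℝ) * pabs a) (pabs b)

/-- `F` is NS*-continuous: for no `x₁, x₂` does `|x₂ − x₁| ≪ |F x₂ − F x₁|` hold. -/
def NSStarContinuous (F : PowerSeries ℝ → PowerSeries ℝ) : Prop :=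
  ∀ x₁ x₂ : PowerSeries ℝ, ¬ muchLt (x₂ - x₁) (F x₂ - F x₁)

/-- `F` is continuous at `x₀` for the order topology (ε-η form). -/
def OrderContinuousAt (F : PowerSeries ℝ → PowerSeries ℝ) (x₀ : PowerSeries ℝ) : Prop :=
  ∀ ε : PowerSeries ℝ, lexLt 0 ε → ∃ η : PowerSeries ℝ, lexLt 0 η ∧
    ∀ x : PowerSeries ℝ, lexLt (pabs (x - x₀)) η → lexLt (pabs (F x - F x₀)) ε

/-- The left-shift map `∑ aₖ Xᵏ ↦ ∑ a_{k+1} Xᵏ`. -/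
noncomputable def shiftLeft (x : PowerSeries ℝ) : PowerSeries ℝ :=
  PowerSeries.mk fun k => coeff (k + 1) x
lemma isPos_asymm {z : PowerSeries ℝ} (h1 : IsPos z) (h2 : IsPos (-z)) : False := by
  obtain ⟨p, hp, hpp⟩ := h1
  obtain ⟨q, hq, hqq⟩ := h2
  rw [map_neg] at hqq
  rcases lt_trichotomy p q with h | h | h
  · have := hq p h; rw [map_neg, neg_eq_zero] at this; linarith
  · subst h; linarith
  · have := hp q h; linarith

lemma isPos_or_neg {z : PowerSeries ℝ} (hz : z ≠ 0) : IsPos z ∨ IsPos (-z) := by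
  have hex : ∃ n, coeff n z ≠ 0 := by
    by_contra h
    push_neg at h
    exact hz (PowerSeries.ext fun n => by simpa using h n)
  set n := Nat.find hex with hn
  have hspec : coeff n z ≠ 0 := Nat.find_spec hex
  have hlt : ∀ k < n, coeff k z = 0 := by
    intro k hk
    by_contra h
    exact absurd (Nat.find_le h) (not_le.mpr hk)
  rcases lt_or_gt_of_ne hspec with h | h
  · right
    exact ⟨n, fun k hk => by rw [map_neg, hlt k hk, neg_zero], by rw [map_neg]; linarith⟩
  · left
    exact ⟨n, hlt, h⟩

lemma lexLe_zero_pabs (z : PowerSeries ℝ) : lexLe 0 (pabs z) := by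
  unfold pabs
  split
  · assumption
  · rename_i h
    by_cases hz : z = 0
    · exact Or.inl (by rw [hz, neg_zero])
    · rcases isPos_or_neg hz with hp | hp
      · exact absurd (Or.inr (by rwa [sub_zero])) h
      · exact Or.inr (by rwa [sub_zero])

lemma pabs_eq_or (z : PowerSeries ℝ) : pabs z = z ∨ pabs z = -z := by
  unfold pabs; split <;> simp

lemma shiftLeft_coeff (x : PowerSeries ℝ) (k : ℕ) :
    coeff k (shiftLeft x) = coeff (k + 1) x := by
  simp [shiftLeft]

lemma shiftLeft_sub (x y : PowerSeries ℝ) :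
    shiftLeft x - shiftLeft y = shiftLeft (x - y) := by
  apply PowerSeries.ext
  intro n
  simp [shiftLeft_coeff]

lemma pabs_zero : pabs 0 = 0 := by
  unfold pabs
  have hle : lexLe 0 (0 : PowerSeries ℝ) := Or.inl rfl
  rw [if_pos hle]

lemma key (ε d : PowerSeries ℝ) (hε : lexLt 0 ε)
    (h : lexLt (pabs d) (ε * X)) : lexLt (pabs (shiftLeft d)) ε := by
  by_cases hd : d = 0
  · subst hd
    have : shiftLeft 0 = 0 := by
      apply PowerSeries.ext; intro n; simp [shiftLeft_coeff]
    rw [this, pabs_zero]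
    exact hε
  -- d ≠ 0
  set a := pabs d with ha
  have hane : a ≠ 0 := by
    rcases pabs_eq_or d with h' | h' <;> rw [ha, h'] <;> simpa using hd
  have haP : IsPos a := by
    rcases lexLe_zero_pabs d with h' | h'
    · exact absurd h'.symm hane
    · rwa [sub_zero] at h'
  obtain ⟨p, hp, hpp⟩ := h
  -- p ≠ 0
  obtain ⟨n, hn, hnn⟩ := haP
  have hp0 : p ≠ 0 := by
    intro h0
    subst h0
    rw [map_sub, coeff_zero_mul_X, zero_sub] at hpp
    rcases Nat.eq_zero_or_pos n with h0 | h0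
    · subst h0; linarith
    · have := hn 0 h0; rw [show coeff 0 a = a.coeff 0 from rfl] at *; linarith
  obtain ⟨q, rfl⟩ := Nat.exists_eq_succ_of_ne_zero hp0
  have ha0 : coeff 0 a = 0 := by
    have := hp 0 (Nat.succ_pos q)
    rw [map_sub, coeff_zero_mul_X, zero_sub, neg_eq_zero] at this
    exact this
  -- n ≠ 0
  have hn0 : n ≠ 0 := by intro h0; subst h0; linarith
  obtain ⟨m, rfl⟩ := Nat.exists_eq_succ_of_ne_zero hn0
  have hsa : IsPos (shiftLeft a) := by
    refine ⟨m, fun k hk => ?_, ?_⟩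
    · rw [shiftLeft_coeff]; exact hn (k + 1) (Nat.succ_lt_succ hk)
    · rw [shiftLeft_coeff]; exact hnn
  have hpsa : pabs (shiftLeft d) = shiftLeft a := by
    rcases pabs_eq_or d with h' | h'
    · have heq : shiftLeft d = shiftLeft a := by rw [ha, h']
      have hle : lexLe 0 (shiftLeft d) :=
        Or.inr (by rw [sub_zero, heq]; exact hsa)
      unfold pabs
      rw [if_pos hle, heq]
    · have heq : shiftLeft d = -shiftLeft a := by
        apply PowerSeries.ext; intro k
        have : coeff (k+1) a = -coeff (k+1) d := by rw [ha, h', map_neg]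
        rw [map_neg, shiftLeft_coeff, shiftLeft_coeff, this, neg_neg]
      unfold pabs
      rw [if_neg, heq, neg_neg]
      intro hle
      rcases hle with h0 | hP
      · have : shiftLeft a = 0 := by rw [heq] at h0; rw [← neg_eq_zero, h0]
        obtain ⟨_, _, hx⟩ := hsa
        rw [this] at hx
        simp at hx
      · rw [sub_zero, heq] at hP
        exact isPos_asymm hsa hP
  rw [hpsa]
  refine ⟨q, fun k hk => ?_, ?_⟩
  · have := hp (k + 1) (Nat.succ_lt_succ hk)
    rw [map_sub, coeff_succ_mul_X] at this
    rw [map_sub, shiftLeft_coeff]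
    linarith
  · rw [map_sub, coeff_succ_mul_X] at hpp
    rw [map_sub, shiftLeft_coeff]
    linarith

lemma epsX_pos (ε : PowerSeries ℝ) (hε : lexLt 0 ε) : lexLt 0 (ε * X) := by
  obtain ⟨p, hp, hpp⟩ := hε
  rw [sub_zero] at hp hpp
  show IsPos (ε * X - 0)
  rw [sub_zero]
  refine ⟨p + 1, fun k hk => ?_, ?_⟩
  · cases k with
    | zero => exact coeff_zero_mul_X ε
    | succ j => rw [coeff_succ_mul_X]; exact hp j (Nat.lt_of_succ_lt_succ hk)
  · rw [coeff_succ_mul_X]; exact hpp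

/-- the left shift is continuous everywhere in the order topology
(one may take `η = ε·X`), but it is not NS*-continuous. -/
theorem shiftLeft_orderContinuous_not_nsStarContinuous :
    (∀ x₀ : PowerSeries ℝ, OrderContinuousAt shiftLeft x₀) ∧
    (∀ (x₀ ε : PowerSeries ℝ), lexLt 0 ε →
      ∀ x : PowerSeries ℝ, lexLt (pabs (x - x₀)) (ε * X) →
        lexLt (pabs (shiftLeft x - shiftLeft x₀)) ε) ∧
    ¬ NSStarContinuous shiftLeft := by
  refine ⟨?_, ?_, ?_⟩
  · intro x₀ ε hε
    exact ⟨ε * X, epsX_pos ε hε, fun x hx => by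
      rw [shiftLeft_sub]; exact key ε (x - x₀) hε hx⟩
  · intro x₀ ε hε x hx
    rw [shiftLeft_sub]; exact key ε (x - x₀) hε hx
  · intro h
    apply h 0 X
    intro k
    have hX1 : shiftLeft X = 1 := by
      apply PowerSeries.ext
      intro n
      rw [shiftLeft_coeff, PowerSeries.coeff_X, PowerSeries.coeff_one]
      by_cases hn : n = 0 <;> simp [hn]
    have hs0 : shiftLeft 0 = 0 := by
      apply PowerSeries.ext; intro n; simp [shiftLeft_coeff]
    have hXpos : IsPos X := by
      refine ⟨1, fun j hj => ?_, ?_⟩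
      · interval_cases j; simp
      · simp
    have hpX : pabs (X - 0) = X := by
      rw [sub_zero]
      have hle : lexLe 0 (X : PowerSeries ℝ) := Or.inr (by rwa [sub_zero])
      unfold pabs
      rw [if_pos hle]
    have hp1 : pabs (shiftLeft X - shiftLeft 0) = 1 := by
      rw [hX1, hs0, sub_zero]
      have hle : lexLe 0 (1 : PowerSeries ℝ) :=
        Or.inr ⟨0, fun j hj => absurd hj (Nat.not_lt_zero j), by simp⟩
      unfold pabs
      rw [if_pos hle]
    rw [hpX, hp1]
    refine ⟨0, fun j hj => absurd hj (Nat.not_lt_zero j), ?_⟩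
    have : coeff 0 ((k : PowerSeries ℝ) * X) = 0 := by
      rw [PowerSeries.coeff_zero_eq_constantCoeff, map_mul]
      simp
    rw [map_sub, this]
    simp
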